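/- arXiv:2012.15239 — 2 statements merged into one kernel-verified Lean document; each statement's English description precedes it below -/
import Mathlib

section
/- Let $f : [0,\infty) \to (0,1]$ be non-increasing, logarithmically superadditive and decay faster than any polynomial. Fix $R > 1$ and $d \in \mathbb{N}$, and define $f_j(s) := f(s)^{1/(5R^2)^j}$ for $j \in \mathbb{N}$. Then for all $j \in \mathbb{N}$ and uniformly in $\alpha, \beta \in [1/R, R]$: $\lim_{N \to \infty} \frac{\sum_{k = \lfloor N/2 \rfloor}^{\infty} (k+1)^{d+1} f_j(k)^{\alpha}}{f_{j+1}(N)^{\beta}} = 0$, provided $\sum_{k=0}^\infty (k+1)^{d+1} f_j(k)^{1/(2R)} < \infty$ for each $j$. -/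
theorem stmt6 (f : ℝ → ℝ) (R : ℝ) (d : ℕ)
    (hpos : ∀ r, 0 ≤ r → 0 < f r) (hle1 : ∀ r, 0 ≤ r → f r ≤ 1)
    (hmono : ∀ r s, 0 ≤ r → r ≤ s → f s ≤ f r)
    (hlog : ∀ r s, 0 ≤ r → 0 ≤ s → f r * f s ≤ f (r + s))
    (hdecay : ∀ n : ℕ, Filter.Tendsto (fun r : ℝ => r ^ n * f r) Filter.atTop (nhds 0))
    (hR : 1 < R)
    (hsum : ∀ j : ℕ, 1 ≤ j → Summable (fun k : ℕ =>
      ((k : ℝ) + 1) ^ (d + 1) * f k ^ (((5 * R ^ 2) ^ j)⁻¹ / (2 * R)))) :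
    ∀ j : ℕ, 1 ≤ j → ∀ ε > 0, ∃ N₀ : ℕ, ∀ N ≥ N₀, ∀ α β : ℝ,
      α ∈ Set.Icc (1 / R) R → β ∈ Set.Icc (1 / R) R →
      (∑' k : ℕ, (((k + N / 2 : ℕ) : ℝ) + 1) ^ (d + 1) *
          (f ((k + N / 2 : ℕ) : ℝ) ^ ((5 * R ^ 2) ^ j)⁻¹) ^ α) /
        (f (N : ℝ) ^ ((5 * R ^ 2) ^ (j + 1))⁻¹) ^ β < ε := by
  intro j hj ε hε
  have hR0 : (0 : ℝ) < R := lt_trans one_pos hR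
  set c : ℝ := ((5 * R ^ 2) ^ j)⁻¹ with hc
  have hc0 : 0 < c := by positivity
  set q : ℝ := c / (10 * R) with hqdef
  have hq0 : 0 < q := by positivity
  set p : ℝ := c / (5 * R) with hpdef
  have hp0 : 0 < p := by positivity
  have hf1 : 0 < f 1 := hpos 1 zero_le_one
  -- the full sum
  set g : ℕ → ℝ := fun k => ((k : ℝ) + 1) ^ (d + 1) * f k ^ (c / (2 * R)) with hg
  have hgnn : ∀ k, 0 ≤ g k := by
    intro k
    have := (hpos k (Nat.cast_nonneg k)).le
    positivity
  have hS : Summable g := hsum j hj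
  set S : ℝ := ∑' k : ℕ, g k with hSdef
  have hS0 : 0 ≤ S := tsum_nonneg hgnn
  set η : ℝ := ε * f 1 ^ p / (S + 1) with hηdef
  have hη0 : 0 < η := by positivity
  -- f tends to 0
  have hf0 : Filter.Tendsto f Filter.atTop (nhds 0) := by
    have := hdecay 0
    simpa using this
  have hfq : Filter.Tendsto (fun r => f r ^ q) Filter.atTop (nhds 0) := by
    have := hf0.rpow_const (p := q) (Or.inr hq0.le)
    simpa [Real.zero_rpow hq0.ne'] using this
  obtain ⟨M, hM⟩ := Filter.eventually_atTop.mp (hfq.eventually_lt_const hη0)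
  refine ⟨2 * (⌈M⌉₊ + 1), fun N hN α β hα hβ => ?_⟩
  set m : ℕ := N / 2 with hmdef
  have hmm : ⌈M⌉₊ + 1 ≤ m := by
    rw [hmdef, Nat.le_div_iff_mul_le (by norm_num)]
    omega
  have hmM : M ≤ (m : ℝ) :=
    le_trans (Nat.le_ceil M) (by exact_mod_cast le_trans (Nat.le_succ _) hmm)
  have hm0 : (0 : ℝ) ≤ (m : ℝ) := Nat.cast_nonneg m
  have hfm : 0 < f m := hpos m hm0
  have hfm1 : f m ≤ 1 := hle1 m hm0
  have hfN : 0 < f N := hpos N (Nat.cast_nonneg N)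
  have hfN1 : f N ≤ 1 := hle1 N (Nat.cast_nonneg N)
  obtain ⟨hα1, hα2⟩ := hα
  obtain ⟨hβ1, hβ2⟩ := hβ
  -- Step A: numerator bound
  have hshift : Summable (fun k : ℕ => g (k + m)) :=
    hS.comp_injective (add_left_injective m)
  have htail : (∑' k : ℕ, g (k + m)) ≤ S := by
    refine Summable.tsum_le_tsum_of_inj (fun k => k + m) (add_left_injective m)
      (fun k _ => hgnn k) (fun k => le_rfl) hshift hS
  have htailnn : 0 ≤ ∑' k : ℕ, g (k + m) := tsum_nonneg fun k => hgnn _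
  have hterm : ∀ k : ℕ,
      (((k + m : ℕ) : ℝ) + 1) ^ (d + 1) * (f ((k + m : ℕ) : ℝ) ^ c) ^ α ≤
        f m ^ (c / (2 * R)) * g (k + m) := by
    intro k
    have hx0 : (0 : ℝ) ≤ ((k + m : ℕ) : ℝ) := Nat.cast_nonneg _
    have hfx : 0 < f ((k + m : ℕ) : ℝ) := hpos _ hx0
    have hfx1 : f ((k + m : ℕ) : ℝ) ≤ 1 := hle1 _ hx0
    have h1 : (f ((k + m : ℕ) : ℝ) ^ c) ^ α = f ((k + m : ℕ) : ℝ) ^ (c * α) :=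
      (Real.rpow_mul hfx.le c α).symm
    have h2 : f ((k + m : ℕ) : ℝ) ^ (c * α) ≤ f ((k + m : ℕ) : ℝ) ^ (c * (1 / R)) := by
      apply Real.rpow_le_rpow_of_exponent_ge hfx hfx1
      exact mul_le_mul_of_nonneg_left hα1 hc0.le
    have h3 : c * (1 / R) = c / (2 * R) + c / (2 * R) := by
      field_simp; ring
    have h4 : f ((k + m : ℕ) : ℝ) ^ (c / (2 * R) + c / (2 * R)) =
        f ((k + m : ℕ) : ℝ) ^ (c / (2 * R)) * f ((k + m : ℕ) : ℝ) ^ (c / (2 * R)) :=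
      Real.rpow_add hfx _ _
    have h5 : f ((k + m : ℕ) : ℝ) ≤ f m := by
      apply hmono m _ hm0
      exact_mod_cast Nat.le_add_left m k
    have h6 : f ((k + m : ℕ) : ℝ) ^ (c / (2 * R)) ≤ f m ^ (c / (2 * R)) :=
      Real.rpow_le_rpow hfx.le h5 (by positivity)
    calc (((k + m : ℕ) : ℝ) + 1) ^ (d + 1) * (f ((k + m : ℕ) : ℝ) ^ c) ^ α
        ≤ (((k + m : ℕ) : ℝ) + 1) ^ (d + 1) *
          (f ((k + m : ℕ) : ℝ) ^ (c / (2 * R)) * f ((k + m : ℕ) : ℝ) ^ (c / (2 * R))) := by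
          rw [h1, ← h4, ← h3]
          exact mul_le_mul_of_nonneg_left h2
            (by positivity : (0:ℝ) ≤ (((k + m : ℕ) : ℝ) + 1) ^ (d + 1))
      _ ≤ f m ^ (c / (2 * R)) * g (k + m) := by
          have hgk : g (k + m) = (((k + m : ℕ) : ℝ) + 1) ^ (d + 1) *
              f ((k + m : ℕ) : ℝ) ^ (c / (2 * R)) := rfl
          rw [hgk]
          have hPa : (0:ℝ) ≤ (((k + m : ℕ) : ℝ) + 1) ^ (d + 1) *
              f ((k + m : ℕ) : ℝ) ^ (c / (2 * R)) :=
            mul_nonneg (by positivity) (Real.rpow_nonneg hfx.le _)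
          calc (((k + m : ℕ) : ℝ) + 1) ^ (d + 1) *
              (f ((k + m : ℕ) : ℝ) ^ (c / (2 * R)) * f ((k + m : ℕ) : ℝ) ^ (c / (2 * R)))
              = f ((k + m : ℕ) : ℝ) ^ (c / (2 * R)) *
                ((((k + m : ℕ) : ℝ) + 1) ^ (d + 1) * f ((k + m : ℕ) : ℝ) ^ (c / (2 * R))) := by
                ring
            _ ≤ f (m : ℝ) ^ (c / (2 * R)) *
                ((((k + m : ℕ) : ℝ) + 1) ^ (d + 1) * f ((k + m : ℕ) : ℝ) ^ (c / (2 * R))) :=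
                mul_le_mul_of_nonneg_right h6 hPa
  have hnumsum : Summable (fun k : ℕ =>
      (((k + m : ℕ) : ℝ) + 1) ^ (d + 1) * (f ((k + m : ℕ) : ℝ) ^ c) ^ α) := by
    apply Summable.of_nonneg_of_le _ hterm (hshift.mul_left _)
    intro k
    have hx0 : (0 : ℝ) ≤ ((k + m : ℕ) : ℝ) := Nat.cast_nonneg _
    have hfx := (hpos _ hx0).le
    positivity
  have hnum : (∑' k : ℕ, (((k + m : ℕ) : ℝ) + 1) ^ (d + 1) *
      (f ((k + m : ℕ) : ℝ) ^ c) ^ α) ≤ f m ^ (c / (2 * R)) * S := by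
    calc (∑' k : ℕ, (((k + m : ℕ) : ℝ) + 1) ^ (d + 1) * (f ((k + m : ℕ) : ℝ) ^ c) ^ α)
        ≤ ∑' k : ℕ, f m ^ (c / (2 * R)) * g (k + m) :=
          Summable.tsum_le_tsum hterm hnumsum (hshift.mul_left _)
      _ = f m ^ (c / (2 * R)) * ∑' k : ℕ, g (k + m) := tsum_mul_left
      _ ≤ f m ^ (c / (2 * R)) * S := by
          apply mul_le_mul_of_nonneg_left htail (by positivity)
  -- Step B: denominator bound
  have hNle : (N : ℝ) ≤ 2 * (m : ℝ) + 1 := by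
    have : N ≤ 2 * m + 1 := by omega
    exact_mod_cast this
  have hfN2 : f m ^ 2 * f 1 ≤ f N := by
    have e1 : f m * f 1 ≤ f ((m : ℝ) + 1) := hlog m 1 hm0 zero_le_one
    have e2 : f m * f ((m : ℝ) + 1) ≤ f ((m : ℝ) + ((m : ℝ) + 1)) :=
      hlog m ((m : ℝ) + 1) hm0 (by positivity)
    have e3 : f ((m : ℝ) + ((m : ℝ) + 1)) ≤ f N := by
      have : (m : ℝ) + ((m : ℝ) + 1) = 2 * (m : ℝ) + 1 := by ring
      rw [this]
      exact hmono N (2 * (m : ℝ) + 1) (Nat.cast_nonneg N) hNle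
    calc f (m : ℝ) ^ 2 * f 1 = f (m : ℝ) * (f (m : ℝ) * f 1) := by ring
      _ ≤ f (m : ℝ) * f ((m : ℝ) + 1) := mul_le_mul_of_nonneg_left e1 hfm.le
      _ ≤ f ((m : ℝ) + ((m : ℝ) + 1)) := e2
      _ ≤ f N := e3
  have hc' : ((5 * R ^ 2) ^ (j + 1))⁻¹ * β ≤ p := by
    have h1 : ((5 * R ^ 2) ^ (j + 1) : ℝ)⁻¹ = c * (5 * R ^ 2)⁻¹ := by
      rw [hc, pow_succ, mul_inv]
    rw [h1]
    have h2 : c * (5 * R ^ 2)⁻¹ * β ≤ c * (5 * R ^ 2)⁻¹ * R :=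
      mul_le_mul_of_nonneg_left hβ2 (by positivity)
    refine h2.trans_eq ?_
    rw [hpdef]
    field_simp
  have hden : f m ^ (2 * p) * f 1 ^ p ≤ (f (N : ℝ) ^ ((5 * R ^ 2) ^ (j + 1))⁻¹) ^ β := by
    have h1 : (f (N : ℝ) ^ ((5 * R ^ 2) ^ (j + 1))⁻¹) ^ β =
        f (N : ℝ) ^ (((5 * R ^ 2) ^ (j + 1))⁻¹ * β) :=
      (Real.rpow_mul hfN.le _ _).symm
    rw [h1]
    have h2 : f (N : ℝ) ^ (((5 * R ^ 2) ^ (j + 1))⁻¹ * β) ≥ f (N : ℝ) ^ p :=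
      Real.rpow_le_rpow_of_exponent_ge hfN hfN1 hc'
    refine le_trans ?_ h2
    have h3 : f m ^ (2 * p) * f 1 ^ p = (f m ^ 2 * f 1) ^ p := by
      rw [Real.mul_rpow (by positivity) hf1.le]
      congr 1
      rw [← Real.rpow_natCast (f m) 2, ← Real.rpow_mul hfm.le]
      norm_num
    rw [h3]
    exact Real.rpow_le_rpow (by positivity) hfN2 hp0.le
  have hdenpos : 0 < f m ^ (2 * p) * f 1 ^ p := by positivity
  -- Step C: combine
  have hnumnn : 0 ≤ ∑' k : ℕ, (((k + m : ℕ) : ℝ) + 1) ^ (d + 1) *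
      (f ((k + m : ℕ) : ℝ) ^ c) ^ α := by
    apply tsum_nonneg
    intro k
    have hx0 : (0 : ℝ) ≤ ((k + m : ℕ) : ℝ) := Nat.cast_nonneg _
    have hfx := (hpos _ hx0).le
    positivity
  have hratio : (∑' k : ℕ, (((k + m : ℕ) : ℝ) + 1) ^ (d + 1) *
        (f ((k + m : ℕ) : ℝ) ^ c) ^ α) /
      (f (N : ℝ) ^ ((5 * R ^ 2) ^ (j + 1))⁻¹) ^ β ≤
      (f m ^ (c / (2 * R)) * S) / (f m ^ (2 * p) * f 1 ^ p) :=
    div_le_div₀ (by positivity) hnum hdenpos hden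
  have hsplit : f m ^ (c / (2 * R)) = f m ^ (2 * p) * f m ^ q := by
    rw [← Real.rpow_add hfm]
    congr 1
    rw [hpdef, hqdef]
    field_simp
    ring
  have hfmq : f m ^ q < η := hM m hmM
  have hfmqnn : 0 ≤ f m ^ q := by positivity
  have hfinal : (f m ^ (c / (2 * R)) * S) / (f m ^ (2 * p) * f 1 ^ p) < ε := by
    rw [hsplit]
    have heq : (f m ^ (2 * p) * f m ^ q * S) / (f m ^ (2 * p) * f 1 ^ p) =
        f m ^ q * S / f 1 ^ p := by
      rw [mul_assoc, mul_div_mul_left _ _ (by positivity : (0:ℝ) < f m ^ (2 * p)).ne']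
    rw [heq]
    calc f m ^ q * S / f 1 ^ p ≤ η * S / f 1 ^ p := by
          exact div_le_div₀ (mul_nonneg hη0.le hS0)
            (mul_le_mul_of_nonneg_right hfmq.le hS0) (by positivity) le_rfl
      _ = ε * S / (S + 1) := by
          rw [hηdef]; field_simp
      _ < ε := by
          rw [div_lt_iff₀ (by positivity)]; nlinarith
  calc _ ≤ (f m ^ (c / (2 * R)) * S) / (f m ^ (2 * p) * f 1 ^ p) := hratio
    _ < ε := hfinal
end

section
/- Let $(f_1, f_2)$ be bounded non-increasing functions $[0,\infty) \to (0,\infty)$ tending to zero at infinity with $\sup_{N\in\mathbb{N}} f_1(N - \lfloor N/2 \rfloor)/f_2(N) < \infty$. Let $(E_N)_{N\in\mathbb{N}}$ be a sequence of linear contractions on a Banach space $X$ (each $\|E_N\| \le 1$), and suppose $T : X \to X$ is a linear isometry. Let $X_{f}$ denote the set of $x \in X$ with $\|x\|_f := \|x\| + \sup_N \|(1-E_N)x\|/f(N) < \infty$. Assume there is a constant $C$ with $\|(1 - E_N) T E_k x\| \le C \|x\|\, k^d\, \zeta(N - k)$ for all $k < N$ and $x \in X$, where $\zeta$ is non-increasing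 with $\sup_N N^d \zeta(\lfloor N/2 \rfloor)/f_2(N) < \infty$. Then $T$ maps $X_{f_1}$ boundedly into $X_{f_2}$: there is $C'$ with $\|Tx\|_{f_2} \le C' \|x\|_{f_1}$ for all $x \in X_{f_1}$. -/
theorem stmt13 {X : Type*} [NormedAddCommGroup X] [NormedSpace ℝ X] [CompleteSpace X]
    (d : ℕ) (E : ℕ → X →L[ℝ] X) (hE : ∀ N, ‖E N‖ ≤ 1)
    (T : X →L[ℝ] X) (hT : ∀ x, ‖T x‖ = ‖x‖)
    (f₁ f₂ ζ : ℕ → ℝ)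
    (hf₁pos : ∀ N, 0 < f₁ N) (hf₂pos : ∀ N, 0 < f₂ N) (hζpos : ∀ N, 0 < ζ N)
    (hf₁mono : ∀ m n, m ≤ n → f₁ n ≤ f₁ m) (hf₂mono : ∀ m n, m ≤ n → f₂ n ≤ f₂ m)
    (hζmono : ∀ m n, m ≤ n → ζ n ≤ ζ m)
    (hf₁lim : Filter.Tendsto f₁ Filter.atTop (nhds 0))
    (hf₂lim : Filter.Tendsto f₂ Filter.atTop (nhds 0))
    (hcompat₁ : ∃ K, ∀ N : ℕ, f₁ (N - N / 2) / f₂ N ≤ K)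
    (C : ℝ)
    (hloc : ∀ k N : ℕ, k < N → ∀ x : X,
      ‖T (E k x) - E N (T (E k x))‖ ≤ C * ‖x‖ * (k : ℝ) ^ d * ζ (N - k))
    (hcompat₂ : ∃ K, ∀ N : ℕ, (N : ℝ) ^ d * ζ (N / 2) / f₂ N ≤ K) :
    ∃ C' : ℝ, ∀ x : X,
      BddAbove (Set.range fun N => ‖x - E N x‖ / f₁ N) →
      BddAbove (Set.range fun N => ‖T x - E N (T x)‖ / f₂ N) ∧
      ‖T x‖ + (⨆ N : ℕ, ‖T x - E N (T x)‖ / f₂ N) ≤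
        C' * (‖x‖ + ⨆ N : ℕ, ‖x - E N x‖ / f₁ N) := by
  obtain ⟨K₁, hK₁⟩ := hcompat₁
  obtain ⟨K₂, hK₂⟩ := hcompat₂
  have hK₁pos : 0 < K₁ := lt_of_lt_of_le (div_pos (hf₁pos _) (hf₂pos 0)) (hK₁ 0)
  have hK₂pos : 0 < K₂ := by
    refine lt_of_lt_of_le ?_ (hK₂ 1)
    simp only [Nat.cast_one, one_pow, one_mul]
    exact div_pos (hζpos _) (hf₂pos 1)
  refine ⟨1 + 2 / f₂ 1 + |C| * K₂ + 2 * K₁, fun x hbdd => ?_⟩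
  set S := ⨆ N : ℕ, ‖x - E N x‖ / f₁ N with hS
  have hSge : ∀ N, ‖x - E N x‖ / f₁ N ≤ S := fun N => le_ciSup hbdd N
  have hSnonneg : 0 ≤ S := le_trans (div_nonneg (norm_nonneg _) (hf₁pos 0).le) (hSge 0)
  have hSle : ∀ N, ‖x - E N x‖ ≤ S * f₁ N := fun N =>
    (div_le_iff₀ (hf₁pos N)).mp (hSge N)
  set B := 2 / f₂ 1 * ‖x‖ + |C| * K₂ * ‖x‖ + 2 * K₁ * S with hB
  have key : ∀ N, ‖T x - E N (T x)‖ / f₂ N ≤ B := by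
    intro N
    rcases lt_or_ge N 2 with hN | hN
    · -- small N : trivial bound
      have h1 : ‖T x - E N (T x)‖ ≤ 2 * ‖x‖ := by
        calc ‖T x - E N (T x)‖ ≤ ‖T x‖ + ‖E N (T x)‖ := norm_sub_le _ _
          _ ≤ ‖x‖ + ‖x‖ := by
              refine add_le_add (le_of_eq (hT x)) ?_
              calc ‖E N (T x)‖ ≤ ‖E N‖ * ‖T x‖ := (E N).le_opNorm _
                _ ≤ 1 * ‖x‖ := by
                    rw [hT]
                    exact mul_le_mul_of_nonneg_right (hE N) (norm_nonneg x)
                _ = ‖x‖ := one_mul _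
          _ = 2 * ‖x‖ := by ring
      have h2 : ‖T x - E N (T x)‖ / f₂ N ≤ 2 * ‖x‖ / f₂ N := by
        gcongr
        exact (hf₂pos N).le
      have h3 : 2 * ‖x‖ / f₂ N ≤ 2 * ‖x‖ / f₂ 1 := by
        apply div_le_div_of_nonneg_left (by positivity) (hf₂pos 1)
        exact hf₂mono N 1 (by omega)
      have : ‖T x - E N (T x)‖ / f₂ N ≤ 2 / f₂ 1 * ‖x‖ := by
        calc _ ≤ 2 * ‖x‖ / f₂ 1 := h2.trans h3
          _ = 2 / f₂ 1 * ‖x‖ := by ring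
      refine this.trans ?_
      rw [hB]
      nlinarith [mul_nonneg (mul_nonneg (abs_nonneg C) hK₂pos.le) (norm_nonneg x),
        mul_nonneg (mul_nonneg (by norm_num : (0:ℝ) ≤ 2) hK₁pos.le) hSnonneg]
    · -- large N : split at k = N - N/2
      set k := N - N / 2 with hk
      have hk2 : 1 ≤ N / 2 := by omega
      have hkN : k < N := by omega
      have hNk : N - k = N / 2 := by omega
      have hkleN : k ≤ N := Nat.sub_le _ _
      have hdec : T x - E N (T x) =
          (T (x - E k x) - E N (T (x - E k x))) + (T (E k x) - E N (T (E k x))) := by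
        simp only [map_sub]
        abel
      have hfirst : ‖T (x - E k x) - E N (T (x - E k x))‖ ≤ 2 * (S * f₁ k) := by
        calc ‖T (x - E k x) - E N (T (x - E k x))‖
            ≤ ‖T (x - E k x)‖ + ‖E N (T (x - E k x))‖ := norm_sub_le _ _
          _ ≤ ‖x - E k x‖ + ‖x - E k x‖ := by
              refine add_le_add (le_of_eq (hT _)) ?_
              calc ‖E N (T (x - E k x))‖ ≤ ‖E N‖ * ‖T (x - E k x)‖ := (E N).le_opNorm _
                _ ≤ 1 * ‖x - E k x‖ := by
                    rw [hT]
                    exact mul_le_mul_of_nonneg_right (hE N) (norm_nonneg _)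
                _ = ‖x - E k x‖ := one_mul _
          _ ≤ S * f₁ k + S * f₁ k := add_le_add (hSle k) (hSle k)
          _ = 2 * (S * f₁ k) := by ring
      have hf₁k : f₁ k ≤ K₁ * f₂ N := by
        have := hK₁ N
        rw [div_le_iff₀ (hf₂pos N)] at this
        exact this
      have hsecond : ‖T (E k x) - E N (T (E k x))‖ ≤ |C| * ‖x‖ * (K₂ * f₂ N) := by
        calc ‖T (E k x) - E N (T (E k x))‖
            ≤ C * ‖x‖ * (k : ℝ) ^ d * ζ (N - k) := hloc k N hkN x
          _ ≤ |C| * ‖x‖ * (N : ℝ) ^ d * ζ (N / 2) := by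
              rw [hNk]
              have hkd : (k : ℝ) ^ d ≤ (N : ℝ) ^ d :=
                pow_le_pow_left₀ (Nat.cast_nonneg k) (Nat.cast_le.mpr hkleN) d
              have hCle : C ≤ |C| := le_abs_self C
              have h0 : (0:ℝ) ≤ ζ (N / 2) := (hζpos _).le
              have ha : (0:ℝ) ≤ ‖x‖ * (k : ℝ) ^ d * ζ (N / 2) :=
                mul_nonneg (mul_nonneg (norm_nonneg x) (by positivity)) h0
              calc C * ‖x‖ * (k : ℝ) ^ d * ζ (N / 2)
                  = C * (‖x‖ * (k : ℝ) ^ d * ζ (N / 2)) := by ring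
                _ ≤ |C| * (‖x‖ * (k : ℝ) ^ d * ζ (N / 2)) :=
                    mul_le_mul_of_nonneg_right hCle ha
                _ ≤ |C| * (‖x‖ * (N : ℝ) ^ d * ζ (N / 2)) := by
                    refine mul_le_mul_of_nonneg_left ?_ (abs_nonneg C)
                    exact mul_le_mul_of_nonneg_right
                      (mul_le_mul_of_nonneg_left hkd (norm_nonneg x)) h0
                _ = |C| * ‖x‖ * (N : ℝ) ^ d * ζ (N / 2) := by ring
          _ ≤ |C| * ‖x‖ * (K₂ * f₂ N) := by
              have h2 : (N : ℝ) ^ d * ζ (N / 2) ≤ K₂ * f₂ N := by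
                have := hK₂ N
                rw [div_le_iff₀ (hf₂pos N)] at this
                exact this
              have := mul_nonneg (abs_nonneg C) (norm_nonneg x)
              calc |C| * ‖x‖ * (N : ℝ) ^ d * ζ (N / 2)
                  = |C| * ‖x‖ * ((N : ℝ) ^ d * ζ (N / 2)) := by ring
                _ ≤ |C| * ‖x‖ * (K₂ * f₂ N) := by nlinarith
      have htotal : ‖T x - E N (T x)‖ ≤ (2 * K₁ * S + |C| * K₂ * ‖x‖) * f₂ N := by
        rw [hdec]
        calc ‖(T (x - E k x) - E N (T (x - E k x))) + (T (E k x) - E N (T (E k x)))‖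
            ≤ ‖T (x - E k x) - E N (T (x - E k x))‖ + ‖T (E k x) - E N (T (E k x))‖ :=
              norm_add_le _ _
          _ ≤ 2 * (S * f₁ k) + |C| * ‖x‖ * (K₂ * f₂ N) := add_le_add hfirst hsecond
          _ ≤ 2 * (S * (K₁ * f₂ N)) + |C| * ‖x‖ * (K₂ * f₂ N) := by nlinarith
          _ = (2 * K₁ * S + |C| * K₂ * ‖x‖) * f₂ N := by ring
      have : ‖T x - E N (T x)‖ / f₂ N ≤ 2 * K₁ * S + |C| * K₂ * ‖x‖ :=
        (div_le_iff₀ (hf₂pos N)).mpr htotal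
      refine this.trans ?_
      rw [hB]
      have : 0 ≤ 2 / f₂ 1 * ‖x‖ :=
        mul_nonneg (div_nonneg (by norm_num) (hf₂pos 1).le) (norm_nonneg x)
      linarith
  have hbddT : BddAbove (Set.range fun N => ‖T x - E N (T x)‖ / f₂ N) := by
    refine ⟨B, ?_⟩
    rintro _ ⟨N, rfl⟩
    exact key N
  refine ⟨hbddT, ?_⟩
  have hsup : (⨆ N : ℕ, ‖T x - E N (T x)‖ / f₂ N) ≤ B := ciSup_le key
  have hTx : ‖T x‖ = ‖x‖ := hT x
  rw [hTx]
  have h1 : 0 ≤ ‖x‖ := norm_nonneg x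
  have h2 : 0 < f₂ 1 := hf₂pos 1
  have h3 : 0 ≤ 2 / f₂ 1 := div_nonneg (by norm_num) h2.le
  nlinarith [mul_nonneg h3 hSnonneg,
    mul_nonneg (mul_nonneg (abs_nonneg C) hK₂pos.le) hSnonneg,
    mul_nonneg (mul_nonneg (by norm_num : (0:ℝ) ≤ 2) hK₁pos.le) h1]
end
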